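/- For |A| > 1 and left ideals L, L' of A* both containing A^k, we have τ_L ⊆ τ_{L'} if and only if L ⊆ L'. -/
import Mathlib


/-- The relation `τ_L`: `u` and `v` have a common suffix in `L`. -/
def tauRel {A : Type*} (L : Set (List A)) (u v : List A) : Prop :=
  ∃ w ∈ L, w <:+ u ∧ w <:+ v

lemma suffix_cancel {A : Type*} {s t w : List A} (h : s ++ w <:+ t ++ w) : s <:+ t := by
  obtain ⟨r, hr⟩ := h
  refine ⟨r, ?_⟩
  have : (r ++ s) ++ w = t ++ w := by simpa [List.append_assoc] using hr
  exact List.append_cancel_right this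

/-- for `|A| > 1` and left ideals `L, L'` of `A*` both containing `A^k`,
`τ_L ⊆ τ_{L'}` if and only if `L ⊆ L'`. -/
theorem tauRel_subset_iff {A : Type*} [Fintype A] (hA : 1 < Fintype.card A)
    (k : ℕ) (hk : 1 ≤ k) (L L' : Set (List A))
    (hL : ∀ u w : List A, w ∈ L → u ++ w ∈ L)
    (hL' : ∀ u w : List A, w ∈ L' → u ++ w ∈ L')
    (hLk : ∀ w : List A, w.length = k → w ∈ L)
    (hLk' : ∀ w : List A, w.length = k → w ∈ L') :
    (∀ u v : List A, u.length = k → v.length = k → tauRel L u v → tauRel L' u v)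
      ↔ L ⊆ L' := by
  constructor
  · intro h w hw
    by_cases hlen : k ≤ w.length
    · -- w has a suffix of length k, which is in L'; left ideal gives w ∈ L'
      have hdrop : w.drop (w.length - k) ∈ L' := by
        apply hLk'
        simp [Nat.sub_sub_self hlen]
      have := hL' (w.take (w.length - k)) _ hdrop
      rwa [List.take_append_drop] at this
    · push_neg at hlen
      obtain ⟨a, b, hab⟩ := Fintype.exists_pair_of_one_lt_card hA
      set m := k - w.length with hm
      have hm1 : 1 ≤ m := by omega
      set u := List.replicate m a ++ w with hu
      set v := List.replicate m b ++ w with hv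
      have hul : u.length = k := by simp [hu, hm]; omega
      have hvl : v.length = k := by simp [hv, hm]; omega
      have htau : tauRel L u v := ⟨w, hw, List.suffix_append _ _, List.suffix_append _ _⟩
      obtain ⟨w', hw', hwu, hwv⟩ := h u v hul hvl htau
      -- w' and w are both suffixes of u, so comparable
      have hws : w <:+ u := List.suffix_append _ _
      rcases List.suffix_or_suffix_of_suffix hwu hws with hc | hc
      · -- w' <:+ w : then w = t ++ w' ∈ L'
        obtain ⟨t, ht⟩ := hc
        rw [← ht]; exact hL' t w' hw'
      · -- w <:+ w' : write w' = s ++ w, show s = []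
        obtain ⟨s, hs⟩ := hc
        rw [← hs] at hwu hwv hw'
        have hsa : s <:+ List.replicate m a := suffix_cancel hwu
        have hsb : s <:+ List.replicate m b := suffix_cancel hwv
        rcases s.eq_nil_or_concat with rfl | ⟨s', x, rfl⟩
        · simpa using hw'
        · exfalso
          have hxa : x = a := by
            have : x ∈ List.replicate m a := hsa.sublist.subset (by simp)
            exact List.eq_of_mem_replicate this
          have hxb : x = b := by
            have : x ∈ List.replicate m b := hsb.sublist.subset (by simp)
            exact List.eq_of_mem_replicate this
          exact hab (hxa ▸ hxb)
  · rintro h u v _ _ ⟨w, hw, h1, h2⟩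
    exact ⟨w, h hw, h1, h2⟩
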